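/- arXiv:2104.14675 — 2 statements merged into one kernel-verified Lean document; each statement's English description precedes it below -/
import Mathlib

section
/- Consider the scalar advection equation u_t + a u_x = 0 with a > 0, discretized by the upwind scheme L on a uniform grid with ratio λ = aΔt/Δx, whose amplification factor is g(ξ) = 1 - λ(1 - e^{-iξ}). Let L* be the same scheme applied to the time-reversed equation u_t - a u_x = 0 (downwind in reversed time), with amplification factor g*(ξ) = 1 - λ(1 - e^{iξ}) = conj(g(ξ)). Then the BFECC amplification factor is G(ξ) = g(ξ)(1 + (1/2)(1 - |g(ξ)|²)), and |G(ξ)| ≤ 1 for all ξ whenever |g(ξ)| ≤ 2. -/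
/-- Von Neumann analysis of BFECC for the upwind scheme applied to u_t + a u_x = 0:
the backward scheme's amplification factor is the complex conjugate of g(ξ), the BFECC
amplification factor is G(ξ) = g(ξ)(1 + (1/2)(1 - |g(ξ)|²)), and |G(ξ)| ≤ 1 whenever
|g(ξ)| ≤ 2. -/
theorem bfecc_upwind_stability (lam ξ : ℝ) :
    let g : ℂ := 1 - (lam : ℂ) * (1 - Complex.exp (-Complex.I * (ξ : ℂ)))
    let gstar : ℂ := 1 - (lam : ℂ) * (1 - Complex.exp (Complex.I * (ξ : ℂ)))
    let G : ℂ := g * (1 + (1/2 : ℂ) * (1 - ((‖g‖ : ℝ) : ℂ)^2))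
    gstar = (starRingEnd ℂ) g ∧ (‖g‖ ≤ 2 → ‖G‖ ≤ 1) := by
  intro g gstar G
  constructor
  · simp only [gstar, g, map_sub, map_mul, map_one, Complex.conj_ofReal,
      ← Complex.exp_conj, map_neg, Complex.conj_I]
    ring_nf
  · intro hg
    set r := ‖g‖ with hr
    have hr0 : 0 ≤ r := norm_nonneg g
    have : ‖G‖ = r * |1 + (1/2) * (1 - r^2)| := by
      have : (1 + (1/2 : ℂ) * (1 - ((r : ℝ) : ℂ)^2)) =
          ((1 + (1/2 : ℝ) * (1 - r^2) : ℝ) : ℂ) := by push_cast; ring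
      rw [show G = g * (1 + (1/2 : ℂ) * (1 - ((r : ℝ) : ℂ)^2)) from rfl, this,
        norm_mul, Complex.norm_real, Real.norm_eq_abs]
    rw [this]
    rcases abs_cases (1 + (1/2) * (1 - r^2)) with ⟨h, _⟩ | ⟨h, _⟩ <;> rw [h] <;>
      nlinarith [sq_nonneg (r - 1), sq_nonneg (r + 1), sq_nonneg r]
end

section
/- Let f : ℝ² → ℝ be C² and let the 5-point stencil be pᵢ = p₀ + δᵢ with ‖δᵢ‖ ≤ C h and the design matrix A (rows (δᵢ, 1)) satisfying a uniform full-rank condition σ_min(A diag(1/h,1/h,1)) ≥ c > 0. Then the least-squares slope coefficients (c₀, c₁) of the linear fit to data f(pᵢ) satisfy ‖(c₀,c₁) − ∇f(p₀)‖ ≤ C' h, where C' depends only on c, C, and the second-derivative bound of f. -/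
/-- Second-order Taylor bound from a uniform bound on the second derivative. -/
lemma taylor_bd {K : ℝ} (hK : 0 ≤ K) (f : ℝ × ℝ → ℝ) (hf : ContDiff ℝ 2 f)
    (hK2 : ∀ x, ‖iteratedFDeriv ℝ 2 f x‖ ≤ K) (p₀ δ : ℝ × ℝ) :
    |f (p₀ + δ) - f p₀ - fderiv ℝ f p₀ δ| ≤ K * ‖δ‖ ^ 2 := by
  have hdf : Differentiable ℝ (fderiv ℝ f) :=
    (hf.fderiv_right (m := 1) (by norm_num)).differentiable (by norm_num)
  have hd2 : ∀ z : ℝ × ℝ, ‖fderiv ℝ (fderiv ℝ f) z‖ ≤ K := by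
    intro z
    refine ContinuousLinearMap.opNorm_le_bound _ hK fun u => ?_
    refine ContinuousLinearMap.opNorm_le_bound _ (by positivity) fun v => ?_
    have hev : fderiv ℝ (fderiv ℝ f) z u v = iteratedFDeriv ℝ 2 f z ![u, v] := by
      rw [iteratedFDeriv_two_apply]
      simp
    rw [hev]
    calc ‖iteratedFDeriv ℝ 2 f z ![u, v]‖
        ≤ ‖iteratedFDeriv ℝ 2 f z‖ * ∏ i, ‖![u, v] i‖ :=
          ContinuousMultilinearMap.le_opNorm _ _
      _ ≤ K * (‖u‖ * ‖v‖) := by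
          rw [Fin.prod_univ_two]
          simp only [Matrix.cons_val_zero, Matrix.cons_val_one, Matrix.head_cons]
          exact mul_le_mul_of_nonneg_right (hK2 z) (by positivity)
      _ = K * ‖u‖ * ‖v‖ := by ring
  have hlip : ∀ x y : ℝ × ℝ, ‖fderiv ℝ f x - fderiv ℝ f y‖ ≤ K * ‖x - y‖ := by
    intro x y
    exact Convex.norm_image_sub_le_of_norm_fderiv_le (fun z _ => (hdf z))
      (fun z _ => hd2 z) convex_univ (Set.mem_univ y) (Set.mem_univ x)
  have key := Convex.norm_image_sub_le_of_norm_fderiv_le' (f := f)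
      (x := p₀) (y := p₀ + δ)
      (s := Metric.closedBall p₀ ‖δ‖) (φ := fderiv ℝ f p₀) (C := K * ‖δ‖)
      (fun x _ => (hf.differentiable (by norm_num)).differentiableAt)
      (fun x hx => by
        refine le_trans (hlip x p₀) ?_
        have : ‖x - p₀‖ ≤ ‖δ‖ := by
          simpa [dist_eq_norm] using hx
        exact mul_le_mul_of_nonneg_left this hK)
      (convex_closedBall _ _) (Metric.mem_closedBall_self (norm_nonneg _))
      (by simp [Metric.mem_closedBall, dist_eq_norm])
  have : ‖f (p₀ + δ) - f p₀ - fderiv ℝ f p₀ δ‖ ≤ K * ‖δ‖ * ‖δ‖ := by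
    simpa [add_sub_cancel_left] using key
  calc |f (p₀ + δ) - f p₀ - fderiv ℝ f p₀ δ| ≤ K * ‖δ‖ * ‖δ‖ := this
    _ = K * ‖δ‖ ^ 2 := by ring

/-- First order accuracy of the least-squares gradient on an irregular stencil: if the
stencil points lie within C·h of p₀, the scaled design matrix is uniformly
well-conditioned (smallest singular value ≥ c), and f is C² with second derivatives
bounded by K, then any least-squares minimizer has slope coefficients within
C'·h of ∇f(p₀), with C' depending only on c, C and K. -/
theorem least_squares_gradient_first_order :
    ∀ c C K : ℝ, 0 < c → 0 < C → 0 ≤ K →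
    ∃ C' : ℝ, 0 < C' ∧
      ∀ (f : ℝ × ℝ → ℝ) (p₀ : ℝ × ℝ) (δ : Fin 5 → ℝ × ℝ) (h : ℝ), 0 < h →
        ContDiff ℝ 2 f →
        (∀ x : ℝ × ℝ, ‖iteratedFDeriv ℝ 2 f x‖ ≤ K) →
        (∀ i : Fin 5, ‖δ i‖ ≤ C * h) →
        (∀ v : Fin 3 → ℝ, c^2 * (v 0^2 + v 1^2 + v 2^2) ≤
          ∑ i : Fin 5, ((δ i).1 / h * v 0 + (δ i).2 / h * v 1 + v 2)^2) →
        ∀ cf : Fin 3 → ℝ,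
          (∀ cf' : Fin 3 → ℝ,
            (∑ i : Fin 5, (cf 0 * (δ i).1 + cf 1 * (δ i).2 + cf 2 - f (p₀ + δ i))^2) ≤
            (∑ i : Fin 5, (cf' 0 * (δ i).1 + cf' 1 * (δ i).2 + cf' 2 - f (p₀ + δ i))^2)) →
          Real.sqrt ((cf 0 - fderiv ℝ f p₀ (1, 0))^2 + (cf 1 - fderiv ℝ f p₀ (0, 1))^2) ≤
            C' * h := by
  intro c C K hc hC hK
  refine ⟨(5 * K * C ^ 2 + 1) / c, by positivity, ?_⟩
  intro f p₀ δ h hh hf hK2 hδ hsv cf hmin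
  have hh0 : h ≠ 0 := ne_of_gt hh
  set g1 : ℝ := fderiv ℝ f p₀ (1, 0) with hg1
  set g2 : ℝ := fderiv ℝ f p₀ (0, 1) with hg2
  have hgd : ∀ d : ℝ × ℝ, fderiv ℝ f p₀ d = d.1 * g1 + d.2 * g2 := by
    intro d
    have hd : d = d.1 • ((1 : ℝ), (0 : ℝ)) + d.2 • ((0 : ℝ), (1 : ℝ)) := by
      simp [Prod.ext_iff]
    calc fderiv ℝ f p₀ d = fderiv ℝ f p₀ (d.1 • ((1:ℝ),(0:ℝ)) + d.2 • ((0:ℝ),(1:ℝ))) := by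
          rw [← hd]
      _ = d.1 * g1 + d.2 * g2 := by
          rw [map_add, map_smul, map_smul]; simp [hg1, hg2]
  set r : Fin 5 → ℝ := fun i => f (p₀ + δ i) - f p₀ - ((δ i).1 * g1 + (δ i).2 * g2) with hrdef
  have hr : ∀ i, |r i| ≤ K * C ^ 2 * h ^ 2 := by
    intro i
    have ht := taylor_bd hK f hf hK2 p₀ (δ i)
    rw [hgd] at ht
    calc |r i| ≤ K * ‖δ i‖ ^ 2 := ht
      _ ≤ K * (C * h) ^ 2 := by
          exact mul_le_mul_of_nonneg_left (pow_le_pow_left₀ (norm_nonneg _) (hδ i) 2) hK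
      _ = K * C ^ 2 * h ^ 2 := by ring
  set e0 : ℝ := cf 0 - g1 with he0
  set e1 : ℝ := cf 1 - g2 with he1
  set e2 : ℝ := cf 2 - f p₀ with he2
  set t : Fin 5 → ℝ := fun i => e0 * (δ i).1 + e1 * (δ i).2 + e2 with htdef
  -- minimality against the true-gradient candidate
  have hmin' : ∑ i, (t i - r i) ^ 2 ≤ ∑ i, (r i) ^ 2 := by
    have h1 := hmin ![g1, g2, f p₀]
    have eL : ∀ i : Fin 5,
        (cf 0 * (δ i).1 + cf 1 * (δ i).2 + cf 2 - f (p₀ + δ i)) = t i - r i := by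
      intro i; simp only [htdef, hrdef, he0, he1, he2]; ring
    have eR : ∀ i : Fin 5,
        ((![g1, g2, f p₀] 0) * (δ i).1 + (![g1, g2, f p₀] 1) * (δ i).2 + (![g1, g2, f p₀] 2)
          - f (p₀ + δ i)) ^ 2 = (r i) ^ 2 := by
      intro i
      simp only [Matrix.cons_val_zero, Matrix.cons_val_one, Matrix.head_cons,
        Matrix.cons_val_two, Matrix.tail_cons, hrdef]
      ring
    calc ∑ i, (t i - r i) ^ 2
        = ∑ i : Fin 5, (cf 0 * (δ i).1 + cf 1 * (δ i).2 + cf 2 - f (p₀ + δ i)) ^ 2 :=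
          Finset.sum_congr rfl fun i _ => by rw [eL]
      _ ≤ ∑ i : Fin 5, ((![g1, g2, f p₀] 0) * (δ i).1 + (![g1, g2, f p₀] 1) * (δ i).2
            + (![g1, g2, f p₀] 2) - f (p₀ + δ i)) ^ 2 := h1
      _ = ∑ i, (r i) ^ 2 := Finset.sum_congr rfl fun i _ => eR i
  have hsum_t : ∑ i, (t i) ^ 2 ≤ 4 * ∑ i, (r i) ^ 2 := by
    have h3 : ∀ i : Fin 5, (t i) ^ 2 ≤ 2 * (t i - r i) ^ 2 + 2 * (r i) ^ 2 := by
      intro i; nlinarith [sq_nonneg (t i - 2 * r i)]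
    calc ∑ i, (t i) ^ 2 ≤ ∑ i, (2 * (t i - r i) ^ 2 + 2 * (r i) ^ 2) :=
          Finset.sum_le_sum fun i _ => h3 i
      _ = 2 * ∑ i, (t i - r i) ^ 2 + 2 * ∑ i, (r i) ^ 2 := by
          rw [Finset.sum_add_distrib, ← Finset.mul_sum, ← Finset.mul_sum]
      _ ≤ 4 * ∑ i, (r i) ^ 2 := by linarith
  have hsum_r : ∑ i, (r i) ^ 2 ≤ 5 * (K * C ^ 2 * h ^ 2) ^ 2 := by
    calc ∑ i, (r i) ^ 2 ≤ ∑ _i : Fin 5, (K * C ^ 2 * h ^ 2) ^ 2 := by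
          refine Finset.sum_le_sum fun i _ => ?_
          rw [← sq_abs (r i)]
          exact pow_le_pow_left₀ (abs_nonneg _) (hr i) 2
      _ = 5 * (K * C ^ 2 * h ^ 2) ^ 2 := by
          simp [Finset.sum_const]
  have hsv' := hsv ![h * e0, h * e1, e2]
  simp only [Matrix.cons_val_zero, Matrix.cons_val_one, Matrix.head_cons,
    Matrix.cons_val_two, Matrix.tail_cons] at hsv'
  have hrhs : ∑ i : Fin 5, ((δ i).1 / h * (h * e0) + (δ i).2 / h * (h * e1) + e2) ^ 2
      = ∑ i, (t i) ^ 2 := by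
    refine Finset.sum_congr rfl fun i _ => ?_
    have hx : ∀ x a : ℝ, x / h * (h * a) = a * x := fun x a => by
      field_simp
    rw [hx, hx]
  rw [hrhs] at hsv'
  -- combine
  have h5 : c ^ 2 * (h ^ 2 * (e0 ^ 2 + e1 ^ 2)) ≤ 20 * (K * C ^ 2 * h ^ 2) ^ 2 := by
    nlinarith [sq_nonneg e2, hsv', hsum_t, hsum_r, sq_nonneg c]
  have hh2 : (0 : ℝ) < h ^ 2 := by positivity
  have h6 : c ^ 2 * (e0 ^ 2 + e1 ^ 2) ≤ 20 * (K * C ^ 2) ^ 2 * h ^ 2 := by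
    have h7 : h ^ 2 * (c ^ 2 * (e0 ^ 2 + e1 ^ 2)) ≤ h ^ 2 * (20 * (K * C ^ 2) ^ 2 * h ^ 2) := by
      nlinarith [h5]
    exact le_of_mul_le_mul_left h7 hh2
  have hfin : e0 ^ 2 + e1 ^ 2 ≤ ((5 * K * C ^ 2 + 1) / c * h) ^ 2 := by
    rw [div_mul_eq_mul_div, div_pow, le_div_iff₀ (by positivity : (0:ℝ) < c ^ 2)]
    nlinarith [h6, sq_nonneg (K * C ^ 2 * h), sq_nonneg h,
      mul_nonneg (mul_nonneg hK (sq_nonneg C)) (sq_nonneg h)]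
  calc Real.sqrt (e0 ^ 2 + e1 ^ 2) ≤ Real.sqrt (((5 * K * C ^ 2 + 1) / c * h) ^ 2) :=
        Real.sqrt_le_sqrt hfin
    _ = (5 * K * C ^ 2 + 1) / c * h := Real.sqrt_sq (by positivity)
end
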